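/- Let N be a CCI-envelope of a CCI X of size k ≥ 4 with Y = E(N)\X. If some hyperplane-partition or cohyperplane-partition (J; X₀, ...) of X has a block X₀ of size 2, then X\X₀ is a CCI of N of size k−2. -/

import Mathlib

open Set

namespace Matroid

variable {α : Type*}

/-- A circuit: a minimal dependent set. -/
def IsCircuit' (M : Matroid α) (C : Set α) : Prop :=
  C ⊆ M.E ∧ ¬ M.Indep C ∧ ∀ D, D ⊂ C → M.Indep D

/-- A cocircuit: a circuit of the dual matroid. -/
def IsCocircuit' (M : Matroid α) (C : Set α) : Prop :=
  M✶.IsCircuit' C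

/-- A circuit-cocircuit intersection (CCI). -/
def IsCCI (M : Matroid α) (X : Set α) : Prop :=
  ∃ C K, M.IsCircuit' C ∧ M.IsCocircuit' K ∧ X = C ∩ K

/-- A hyperplane: a maximal proper flat. -/
def IsHyperplane (M : Matroid α) (H : Set α) : Prop :=
  M.IsFlat H ∧ H ≠ M.E ∧ ∀ F, M.IsFlat F → H ⊂ F → F = M.E

/-- The rank of a set: the largest size of an independent subset. -/
noncomputable def rk (M : Matroid α) (A : Set α) : ℕ :=
  sSup {n | ∃ I, I ⊆ A ∧ M.Indep I ∧ I.ncard = n}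

/-- The rank of a matroid. -/
noncomputable def rank (M : Matroid α) : ℕ := M.rk M.E

/-- Deletion of a set from a matroid. -/
def del (M : Matroid α) (D : Set α) : Matroid α := M.restrict (M.E \ D)

/-- Contraction of a set in a matroid. -/
def con (M : Matroid α) (C : Set α) : Matroid α := (M✶.restrict (M.E \ C))✶

/-- `N` is a minor of `M` if it is obtained by a contraction followed by a deletion. -/
def IsMinor' (N M : Matroid α) : Prop := ∃ C D, N = (M.con C).del D

end Matroid


open Matroid Set

lemma closure_flat' {α : Type*} (M : Matroid α) (X : Set α) : M.IsFlat (M.closure X) := by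
  rw [Matroid.closure_def, sInter_eq_iInter]
  haveI : Nonempty ↑{F | M.IsFlat F ∧ X ∩ M.E ⊆ F} :=
    ⟨⟨M.E, M.ground_isFlat, inter_subset_right⟩⟩
  exact Matroid.IsFlat.iInter fun F ↦ F.2.1

lemma compl_cocircuit {α : Type*} {M : Matroid α} {H : Set α}
    (hH : M.IsHyperplane H) : M.IsCocircuit' (M.E \ H) := by
  obtain ⟨hF, hne, hmax⟩ := hH
  have hHE : H ⊆ M.E := hF.subset_ground
  refine ⟨diff_subset, ?_, ?_⟩
  · intro hdep
    have : M.Coindep (M.E \ H) := hdep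
    have hsp := this.compl_spanning
    rw [diff_diff_cancel_left hHE] at hsp
    exact hne (hF.closure ▸ hsp.closure_eq)
  · intro D hD
    have hDE : D ⊆ M.E := hD.subset.trans diff_subset
    obtain ⟨e, heMH, heD⟩ := exists_of_ssubset hD
    have heE : e ∈ M.E := heMH.1
    have hsub : H ∪ {e} ⊆ M.E := union_subset hHE (by simpa)
    have hclF : M.IsFlat (M.closure (H ∪ {e})) := closure_flat' M _
    have hss : H ⊂ M.closure (H ∪ {e}) := by
      refine ssubset_of_subset_not_subset
        (subset_union_left.trans (M.subset_closure _ hsub)) (fun hc ↦ heMH.2 ?_)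
      exact hc ((M.subset_closure _ hsub) (by simp))
    have hcl : M.closure (H ∪ {e}) = M.E := hmax _ hclF hss
    have hsp : M.Spanning (H ∪ {e}) := ⟨hcl, hsub⟩
    have hsub2 : H ∪ {e} ⊆ M.E \ D := by
      refine union_subset (fun x hx ↦ ⟨hHE hx, fun hxD ↦ (hD.subset hxD).2 hx⟩) ?_
      simpa using ⟨heE, heD⟩
    have : M.Spanning (M.E \ D) := hsp.superset hsub2 diff_subset
    exact (coindep_iff_compl_spanning hDE).mpr this

theorem stmt_14 {α : Type*} (N : Matroid α) (k : ℕ) (hk : 4 ≤ k)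
    (hE : N.E.ncard = 2 * k - 2) (hr : N.rank = k - 1) (hr' : N✶.rank = k - 1)
    (X : Set α) (hXcard : X.ncard = k)
    (hXc : N.IsCircuit' X) (hXcc : N.IsCocircuit' X)
    (J X₀ : Set α) (hJ : J ⊆ N.E \ X) (hJcard : J.ncard = k - 3)
    (hX₀ : X₀ ⊆ X) (hX₀card : X₀.ncard = 2)
    (hH : N.IsHyperplane (J ∪ X₀) ∨ N✶.IsHyperplane (J ∪ X₀)) :
    N.IsCCI (X \ X₀) ∧ (X \ X₀).ncard = k - 2 := by
  have hEfin : N.E.Finite := by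
    apply Set.finite_of_ncard_ne_zero
    omega
  have hXfin : X.Finite := hEfin.subset hXc.1
  have hcard : (X \ X₀).ncard = k - 2 := by
    rw [Set.ncard_diff hX₀ (hXfin.subset hX₀), hXcard, hX₀card]
  have hJX : ∀ x ∈ J, x ∉ X := fun x hx ↦ (hJ hx).2
  have hset : ∀ (E' : Set α), X ⊆ E' → X \ X₀ = X ∩ (E' \ (J ∪ X₀)) := by
    intro E' hXE'
    ext x
    simp only [mem_diff, mem_inter_iff, mem_union]
    constructor
    · rintro ⟨hxX, hx0⟩
      exact ⟨hxX, hXE' hxX, fun h ↦ h.elim (fun hJx ↦ hJX x hJx hxX) hx0⟩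
    · rintro ⟨hxX, _, h⟩
      exact ⟨hxX, fun h0 ↦ h (Or.inr h0)⟩
  refine ⟨?_, hcard⟩
  rcases hH with h | h
  · exact ⟨X, N.E \ (J ∪ X₀), hXc, compl_cocircuit h, hset N.E hXc.1⟩
  · refine ⟨N.E \ (J ∪ X₀), X, ?_, hXcc, by rw [hset N.E hXc.1]; exact inter_comm _ _⟩
    have := compl_cocircuit h
    rwa [IsCocircuit', dual_dual, dual_ground] at this
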